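/- For every real x, tr(A_x⁵ · B_x⁵) − p_{5,5}(A_x, B_x) = (5x⁴/126)·(5475x⁶ − 1186x⁵ − 975x⁴ − 626x³ − 335x² + 522x − 1). -/

import Mathlib

open Matrix

/-- The matrix `A_x`. -/
def Amat (x : ℝ) : Matrix (Fin 3) (Fin 3) ℝ :=
  !![1, 0, 0; 0, x, -x; 0, -x, x]

/-- The matrix `B_x`. -/
def Bmat (x : ℝ) : Matrix (Fin 3) (Fin 3) ℝ :=
  !![x, -x, 0; -x, x, 0; 0, 0, 1]

/-- The (finite) set `𝒲_{n,m}` of words with exactly `n` letters `A` (`true`)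
and `m` letters `B` (`false`). -/
def words (n m : ℕ) : Finset (List Bool) :=
  (List.replicate n true ++ List.replicate m false).permutations.toFinset


noncomputable def Ssum (n m : ℕ) (x : ℝ) : Matrix (Fin 3) (Fin 3) ℝ :=
  ∑ w ∈ words n m, (w.map fun b => if b = true then Amat x else Bmat x).prod

lemma mem_words {n m : ℕ} {l : List Bool} :
    l ∈ words n m ↔ l.count true = n ∧ l.count false = m := by
  simp only [words, List.mem_toFinset, List.mem_permutations]
  rw [List.perm_iff_count]
  constructor
  · intro h
    constructor
    · simpa [List.count_append, List.count_replicate] using h true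
    · simpa [List.count_append, List.count_replicate] using h false
  · rintro ⟨h1, h2⟩ a
    cases a <;> simp [List.count_append, List.count_replicate, h1, h2]

lemma words_right_zero (n : ℕ) : words n 0 = {List.replicate n true} := by
  ext l
  simp only [mem_words, Finset.mem_singleton]
  constructor
  · rintro ⟨h1, h2⟩
    have hall : ∀ b ∈ l, b = true := by
      intro b hb
      cases b
      · exact absurd hb (List.count_eq_zero.mp h2)
      · rfl
    have hlen : l.length = n := by
      rw [← h1]
      exact (List.count_eq_length.mpr fun b hb => (hall b hb).symm).symm
    rw [← hlen]
    exact List.eq_replicate_length.mpr hall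
  · rintro rfl
    simp [List.count_replicate]

lemma words_left_zero (m : ℕ) : words 0 m = {List.replicate m false} := by
  ext l
  simp only [mem_words, Finset.mem_singleton]
  constructor
  · rintro ⟨h1, h2⟩
    have hall : ∀ b ∈ l, b = false := by
      intro b hb
      cases b
      · rfl
      · exact absurd hb (List.count_eq_zero.mp h1)
    have hlen : l.length = m := by
      rw [← h2]
      exact (List.count_eq_length.mpr fun b hb => (hall b hb).symm).symm
    rw [← hlen]
    exact List.eq_replicate_length.mpr hall
  · rintro rfl
    simp [List.count_replicate]

lemma Ssum_right_pow (n : ℕ) (x : ℝ) : Ssum n 0 x = Amat x ^ n := by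
  simp [Ssum, words_right_zero, List.map_replicate, List.prod_replicate]

lemma Ssum_left_pow (m : ℕ) (x : ℝ) : Ssum 0 m x = Bmat x ^ m := by
  simp [Ssum, words_left_zero, List.map_replicate, List.prod_replicate]

lemma words_succ_succ (n m : ℕ) :
    words (n+1) (m+1) =
      ((words n (m+1)).image (List.cons true)) ∪ ((words (n+1) m).image (List.cons false)) := by
  ext l
  simp only [Finset.mem_union, Finset.mem_image, mem_words]
  constructor
  · rintro ⟨h1, h2⟩
    match l with
    | [] => simp at h1
    | true :: t =>
        left
        exact ⟨t, ⟨by simpa using h1, by simpa using h2⟩, rfl⟩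
    | false :: t =>
        right
        exact ⟨t, ⟨by simpa using h1, by simpa using h2⟩, rfl⟩
  · rintro (⟨t, ⟨h1, h2⟩, rfl⟩ | ⟨t, ⟨h1, h2⟩, rfl⟩) <;>
      simp [h1, h2, List.count_cons]

lemma Ssum_succ_succ (n m : ℕ) (x : ℝ) :
    Ssum (n+1) (m+1) x = Amat x * Ssum n (m+1) x + Bmat x * Ssum (n+1) m x := by
  have hdis : Disjoint ((words n (m+1)).image (List.cons true))
      ((words (n+1) m).image (List.cons false)) := by
    simp only [Finset.disjoint_left, Finset.mem_image]
    rintro l ⟨t, _, rfl⟩ ⟨t', _, h⟩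
    simp at h
  rw [Ssum, words_succ_succ, Finset.sum_union hdis,
    Finset.sum_image (fun a _ b _ h => by simpa using h),
    Finset.sum_image (fun a _ b _ h => by simpa using h)]
  simp only [List.map_cons, List.prod_cons, if_pos rfl, if_neg (by simp : ¬(false = true))]
  rw [← Finset.mul_sum, ← Finset.mul_sum]
  rfl

lemma s_0_0 (x : ℝ) : Ssum 0 0 x = 1 := by
  simp [Ssum, words_left_zero]

set_option maxHeartbeats 1600000 in
lemma s_0_1 (x : ℝ) : Ssum 0 1 x = !![(1)*x, (-1)*x, 0; (-1)*x, (1)*x, 0; 0, 0, (1)] := by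
  have h : Ssum 0 1 x = Bmat x * Ssum 0 0 x := by
    rw [Ssum_left_pow, Ssum_left_pow, ← pow_succ']
  rw [h, s_0_0]
  ext i j
  fin_cases i <;> fin_cases j <;>
    simp [Amat, Bmat, Matrix.mul_apply, Fin.sum_univ_three] <;> ring

set_option maxHeartbeats 1600000 in
lemma s_0_2 (x : ℝ) : Ssum 0 2 x = !![(2)*x^2, (-2)*x^2, 0; (-2)*x^2, (2)*x^2, 0; 0, 0, (1)] := by
  have h : Ssum 0 2 x = Bmat x * Ssum 0 1 x := by
    rw [Ssum_left_pow, Ssum_left_pow, ← pow_succ']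
  rw [h, s_0_1]
  ext i j
  fin_cases i <;> fin_cases j <;>
    simp [Amat, Bmat, Matrix.mul_apply, Fin.sum_univ_three] <;> ring

set_option maxHeartbeats 1600000 in
lemma s_0_3 (x : ℝ) : Ssum 0 3 x = !![(4)*x^3, (-4)*x^3, 0; (-4)*x^3, (4)*x^3, 0; 0, 0, (1)] := by
  have h : Ssum 0 3 x = Bmat x * Ssum 0 2 x := by
    rw [Ssum_left_pow, Ssum_left_pow, ← pow_succ']
  rw [h, s_0_2]
  ext i j
  fin_cases i <;> fin_cases j <;>
    simp [Amat, Bmat, Matrix.mul_apply, Fin.sum_univ_three] <;> ring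

set_option maxHeartbeats 1600000 in
lemma s_0_4 (x : ℝ) : Ssum 0 4 x = !![(8)*x^4, (-8)*x^4, 0; (-8)*x^4, (8)*x^4, 0; 0, 0, (1)] := by
  have h : Ssum 0 4 x = Bmat x * Ssum 0 3 x := by
    rw [Ssum_left_pow, Ssum_left_pow, ← pow_succ']
  rw [h, s_0_3]
  ext i j
  fin_cases i <;> fin_cases j <;>
    simp [Amat, Bmat, Matrix.mul_apply, Fin.sum_univ_three] <;> ring

set_option maxHeartbeats 1600000 in
lemma s_0_5 (x : ℝ) : Ssum 0 5 x = !![(16)*x^5, (-16)*x^5, 0; (-16)*x^5, (16)*x^5, 0; 0, 0, (1)] := by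
  have h : Ssum 0 5 x = Bmat x * Ssum 0 4 x := by
    rw [Ssum_left_pow, Ssum_left_pow, ← pow_succ']
  rw [h, s_0_4]
  ext i j
  fin_cases i <;> fin_cases j <;>
    simp [Amat, Bmat, Matrix.mul_apply, Fin.sum_univ_three] <;> ring

set_option maxHeartbeats 1600000 in
lemma s_1_0 (x : ℝ) : Ssum 1 0 x = !![(1), 0, 0; 0, (1)*x, (-1)*x; 0, (-1)*x, (1)*x] := by
  have h : Ssum 1 0 x = Amat x * Ssum 0 0 x := by
    rw [Ssum_right_pow, Ssum_right_pow, ← pow_succ']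
  rw [h, s_0_0]
  ext i j
  fin_cases i <;> fin_cases j <;>
    simp [Amat, Bmat, Matrix.mul_apply, Fin.sum_univ_three, Matrix.vecHead, Matrix.vecTail] <;> ring

set_option maxHeartbeats 1600000 in
lemma s_1_1 (x : ℝ) : Ssum 1 1 x = !![(2)*x, (-1)*x + (-1)*x^2, (1)*x^2; (-1)*x + (-1)*x^2, (2)*x^2, (-1)*x + (-1)*x^2; (1)*x^2, (-1)*x + (-1)*x^2, (2)*x] := by
  have h : Ssum 1 1 x = Amat x * Ssum 0 1 x + Bmat x * Ssum 1 0 x :=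
    Ssum_succ_succ 0 0 x
  rw [h, s_0_1, s_1_0]
  ext i j
  fin_cases i <;> fin_cases j <;>
    simp [Amat, Bmat, Matrix.mul_apply, Fin.sum_univ_three] <;> ring

set_option maxHeartbeats 1600000 in
lemma s_1_2 (x : ℝ) : Ssum 1 2 x = !![(5)*x^2 + (1)*x^3, (-3)*x^2 + (-3)*x^3, (1)*x^2 + (2)*x^3; (-3)*x^2 + (-3)*x^3, (1)*x^2 + (5)*x^3, (-1)*x + (-1)*x^2 + (-2)*x^3; (1)*x^2 + (2)*x^3, (-1)*x + (-1)*x^2 + (-2)*x^3, (3)*x] := by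
  have h : Ssum 1 2 x = Amat x * Ssum 0 2 x + Bmat x * Ssum 1 1 x :=
    Ssum_succ_succ 0 1 x
  rw [h, s_0_2, s_1_1]
  ext i j
  fin_cases i <;> fin_cases j <;>
    simp [Amat, Bmat, Matrix.mul_apply, Fin.sum_univ_three] <;> ring

set_option maxHeartbeats 1600000 in
lemma s_1_3 (x : ℝ) : Ssum 1 3 x = !![(12)*x^3 + (4)*x^4, (-8)*x^3 + (-8)*x^4, (1)*x^2 + (2)*x^3 + (4)*x^4; (-8)*x^3 + (-8)*x^4, (4)*x^3 + (12)*x^4, (-1)*x + (-1)*x^2 + (-2)*x^3 + (-4)*x^4; (1)*x^2 + (2)*x^3 + (4)*x^4, (-1)*x + (-1)*x^2 + (-2)*x^3 + (-4)*x^4, (4)*x] := by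
  have h : Ssum 1 3 x = Amat x * Ssum 0 3 x + Bmat x * Ssum 1 2 x :=
    Ssum_succ_succ 0 2 x
  rw [h, s_0_3, s_1_2]
  ext i j
  fin_cases i <;> fin_cases j <;>
    simp [Amat, Bmat, Matrix.mul_apply, Fin.sum_univ_three] <;> ring

set_option maxHeartbeats 1600000 in
lemma s_1_4 (x : ℝ) : Ssum 1 4 x = !![(28)*x^4 + (12)*x^5, (-20)*x^4 + (-20)*x^5, (1)*x^2 + (2)*x^3 + (4)*x^4 + (8)*x^5; (-20)*x^4 + (-20)*x^5, (12)*x^4 + (28)*x^5, (-1)*x + (-1)*x^2 + (-2)*x^3 + (-4)*x^4 + (-8)*x^5; (1)*x^2 + (2)*x^3 + (4)*x^4 + (8)*x^5, (-1)*x + (-1)*x^2 + (-2)*x^3 + (-4)*x^4 + (-8)*x^5, (5)*x] := by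
  have h : Ssum 1 4 x = Amat x * Ssum 0 4 x + Bmat x * Ssum 1 3 x :=
    Ssum_succ_succ 0 3 x
  rw [h, s_0_4, s_1_3]
  ext i j
  fin_cases i <;> fin_cases j <;>
    simp [Amat, Bmat, Matrix.mul_apply, Fin.sum_univ_three] <;> ring

set_option maxHeartbeats 1600000 in
lemma s_1_5 (x : ℝ) : Ssum 1 5 x = !![(64)*x^5 + (32)*x^6, (-48)*x^5 + (-48)*x^6, (1)*x^2 + (2)*x^3 + (4)*x^4 + (8)*x^5 + (16)*x^6; (-48)*x^5 + (-48)*x^6, (32)*x^5 + (64)*x^6, (-1)*x + (-1)*x^2 + (-2)*x^3 + (-4)*x^4 + (-8)*x^5 + (-16)*x^6; (1)*x^2 + (2)*x^3 + (4)*x^4 + (8)*x^5 + (16)*x^6, (-1)*x + (-1)*x^2 + (-2)*x^3 + (-4)*x^4 + (-8)*x^5 + (-16)*x^6, (6)*x] := by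
  have h : Ssum 1 5 x = Amat x * Ssum 0 5 x + Bmat x * Ssum 1 4 x :=
    Ssum_succ_succ 0 4 x
  rw [h, s_0_5, s_1_4]
  ext i j
  fin_cases i <;> fin_cases j <;>
    simp [Amat, Bmat, Matrix.mul_apply, Fin.sum_univ_three] <;> ring

set_option maxHeartbeats 1600000 in
lemma s_2_0 (x : ℝ) : Ssum 2 0 x = !![(1), 0, 0; 0, (2)*x^2, (-2)*x^2; 0, (-2)*x^2, (2)*x^2] := by
  have h : Ssum 2 0 x = Amat x * Ssum 1 0 x := by
    rw [Ssum_right_pow, Ssum_right_pow, ← pow_succ']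
  rw [h, s_1_0]
  ext i j
  fin_cases i <;> fin_cases j <;>
    simp [Amat, Bmat, Matrix.mul_apply, Fin.sum_univ_three, Matrix.vecHead, Matrix.vecTail] <;> ring

set_option maxHeartbeats 1600000 in
lemma s_2_1 (x : ℝ) : Ssum 2 1 x = !![(3)*x, (-1)*x + (-1)*x^2 + (-2)*x^3, (1)*x^2 + (2)*x^3; (-1)*x + (-1)*x^2 + (-2)*x^3, (1)*x^2 + (5)*x^3, (-3)*x^2 + (-3)*x^3; (1)*x^2 + (2)*x^3, (-3)*x^2 + (-3)*x^3, (5)*x^2 + (1)*x^3] := by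
  have h : Ssum 2 1 x = Amat x * Ssum 1 1 x + Bmat x * Ssum 2 0 x :=
    Ssum_succ_succ 1 0 x
  rw [h, s_1_1, s_2_0]
  ext i j
  fin_cases i <;> fin_cases j <;>
    simp [Amat, Bmat, Matrix.mul_apply, Fin.sum_univ_three] <;> ring

set_option maxHeartbeats 1600000 in
lemma s_2_2 (x : ℝ) : Ssum 2 2 x = !![(9)*x^2 + (2)*x^3 + (2)*x^4, (-4)*x^2 + (-5)*x^3 + (-7)*x^4, (1)*x^2 + (6)*x^3 + (5)*x^4; (-4)*x^2 + (-5)*x^3 + (-7)*x^4, (2)*x^2 + (4)*x^3 + (14)*x^4, (-4)*x^2 + (-5)*x^3 + (-7)*x^4; (1)*x^2 + (6)*x^3 + (5)*x^4, (-4)*x^2 + (-5)*x^3 + (-7)*x^4, (9)*x^2 + (2)*x^3 + (2)*x^4] := by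
  have h : Ssum 2 2 x = Amat x * Ssum 1 2 x + Bmat x * Ssum 2 1 x :=
    Ssum_succ_succ 1 1 x
  rw [h, s_1_2, s_2_1]
  ext i j
  fin_cases i <;> fin_cases j <;>
    simp [Amat, Bmat, Matrix.mul_apply, Fin.sum_univ_three] <;> ring

set_option maxHeartbeats 1600000 in
lemma s_2_3 (x : ℝ) : Ssum 2 3 x = !![(25)*x^3 + (11)*x^4 + (9)*x^5, (-14)*x^3 + (-17)*x^4 + (-21)*x^5, (1)*x^2 + (7)*x^3 + (15)*x^4 + (12)*x^5; (-14)*x^3 + (-17)*x^4 + (-21)*x^5, (1)*x^2 + (7)*x^3 + (15)*x^4 + (37)*x^5, (-5)*x^2 + (-6)*x^3 + (-13)*x^4 + (-16)*x^5; (1)*x^2 + (7)*x^3 + (15)*x^4 + (12)*x^5, (-5)*x^2 + (-6)*x^3 + (-13)*x^4 + (-16)*x^5, (14)*x^2 + (3)*x^3 + (4)*x^4 + (4)*x^5] := by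
  have h : Ssum 2 3 x = Amat x * Ssum 1 3 x + Bmat x * Ssum 2 2 x :=
    Ssum_succ_succ 1 2 x
  rw [h, s_1_3, s_2_2]
  ext i j
  fin_cases i <;> fin_cases j <;>
    simp [Amat, Bmat, Matrix.mul_apply, Fin.sum_univ_three] <;> ring

set_option maxHeartbeats 1600000 in
lemma s_2_4 (x : ℝ) : Ssum 2 4 x = !![(67)*x^4 + (40)*x^5 + (30)*x^6, (-1)*x^3 + (-41)*x^4 + (-52)*x^5 + (-58)*x^6, (1)*x^2 + (8)*x^3 + (17)*x^4 + (36)*x^5 + (28)*x^6; (-1)*x^3 + (-41)*x^4 + (-52)*x^5 + (-58)*x^6, (1)*x^2 + (2)*x^3 + (23)*x^4 + (48)*x^5 + (94)*x^6, (-6)*x^2 + (-7)*x^3 + (-15)*x^4 + (-32)*x^5 + (-36)*x^6; (1)*x^2 + (8)*x^3 + (17)*x^4 + (36)*x^5 + (28)*x^6, (-6)*x^2 + (-7)*x^3 + (-15)*x^4 + (-32)*x^5 + (-36)*x^6, (20)*x^2 + (4)*x^3 + (6)*x^4 + (8)*x^5 + (8)*x^6] := by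
  have h : Ssum 2 4 x = Amat x * Ssum 1 4 x + Bmat x * Ssum 2 3 x :=
    Ssum_succ_succ 1 3 x
  rw [h, s_1_4, s_2_3]
  ext i j
  fin_cases i <;> fin_cases j <;>
    simp [Amat, Bmat, Matrix.mul_apply, Fin.sum_univ_three] <;> ring

set_option maxHeartbeats 1600000 in
lemma s_2_5 (x : ℝ) : Ssum 2 5 x = !![(1)*x^4 + (172)*x^5 + (124)*x^6 + (88)*x^7, (-1)*x^3 + (-3)*x^4 + (-112)*x^5 + (-148)*x^6 + (-152)*x^7, (1)*x^2 + (9)*x^3 + (19)*x^4 + (40)*x^5 + (84)*x^6 + (64)*x^7; (-1)*x^3 + (-3)*x^4 + (-112)*x^5 + (-148)*x^6 + (-152)*x^7, (1)*x^2 + (2)*x^3 + (5)*x^4 + (68)*x^5 + (140)*x^6 + (232)*x^7, (-7)*x^2 + (-8)*x^3 + (-17)*x^4 + (-36)*x^5 + (-76)*x^6 + (-80)*x^7; (1)*x^2 + (9)*x^3 + (19)*x^4 + (40)*x^5 + (84)*x^6 + (64)*x^7, (-7)*x^2 + (-8)*x^3 + (-17)*x^4 + (-36)*x^5 + (-76)*x^6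 + (-80)*x^7, (27)*x^2 + (5)*x^3 + (8)*x^4 + (12)*x^5 + (16)*x^6 + (16)*x^7] := by
  have h : Ssum 2 5 x = Amat x * Ssum 1 5 x + Bmat x * Ssum 2 4 x :=
    Ssum_succ_succ 1 4 x
  rw [h, s_1_5, s_2_4]
  ext i j
  fin_cases i <;> fin_cases j <;>
    simp [Amat, Bmat, Matrix.mul_apply, Fin.sum_univ_three] <;> ring

set_option maxHeartbeats 1600000 in
lemma s_3_0 (x : ℝ) : Ssum 3 0 x = !![(1), 0, 0; 0, (4)*x^3, (-4)*x^3; 0, (-4)*x^3, (4)*x^3] := by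
  have h : Ssum 3 0 x = Amat x * Ssum 2 0 x := by
    rw [Ssum_right_pow, Ssum_right_pow, ← pow_succ']
  rw [h, s_2_0]
  ext i j
  fin_cases i <;> fin_cases j <;>
    simp [Amat, Bmat, Matrix.mul_apply, Fin.sum_univ_three, Matrix.vecHead, Matrix.vecTail] <;> ring

set_option maxHeartbeats 1600000 in
lemma s_3_1 (x : ℝ) : Ssum 3 1 x = !![(4)*x, (-1)*x + (-1)*x^2 + (-2)*x^3 + (-4)*x^4, (1)*x^2 + (2)*x^3 + (4)*x^4; (-1)*x + (-1)*x^2 + (-2)*x^3 + (-4)*x^4, (4)*x^3 + (12)*x^4, (-8)*x^3 + (-8)*x^4; (1)*x^2 + (2)*x^3 + (4)*x^4, (-8)*x^3 + (-8)*x^4, (12)*x^3 + (4)*x^4] := by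
  have h : Ssum 3 1 x = Amat x * Ssum 2 1 x + Bmat x * Ssum 3 0 x :=
    Ssum_succ_succ 2 0 x
  rw [h, s_2_1, s_3_0]
  ext i j
  fin_cases i <;> fin_cases j <;>
    simp [Amat, Bmat, Matrix.mul_apply, Fin.sum_univ_three] <;> ring

set_option maxHeartbeats 1600000 in
lemma s_3_2 (x : ℝ) : Ssum 3 2 x = !![(14)*x^2 + (3)*x^3 + (4)*x^4 + (4)*x^5, (-5)*x^2 + (-6)*x^3 + (-13)*x^4 + (-16)*x^5, (1)*x^2 + (7)*x^3 + (15)*x^4 + (12)*x^5; (-5)*x^2 + (-6)*x^3 + (-13)*x^4 + (-16)*x^5, (1)*x^2 + (7)*x^3 + (15)*x^4 + (37)*x^5, (-14)*x^3 + (-17)*x^4 + (-21)*x^5; (1)*x^2 + (7)*x^3 + (15)*x^4 + (12)*x^5, (-14)*x^3 + (-17)*x^4 + (-21)*x^5, (25)*x^3 + (11)*x^4 + (9)*x^5] := by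
  have h : Ssum 3 2 x = Amat x * Ssum 2 2 x + Bmat x * Ssum 3 1 x :=
    Ssum_succ_succ 2 1 x
  rw [h, s_2_2, s_3_1]
  ext i j
  fin_cases i <;> fin_cases j <;>
    simp [Amat, Bmat, Matrix.mul_apply, Fin.sum_univ_three] <;> ring

set_option maxHeartbeats 1600000 in
lemma s_3_3 (x : ℝ) : Ssum 3 3 x = !![(44)*x^3 + (20)*x^4 + (26)*x^5 + (20)*x^6, (-20)*x^3 + (-30)*x^4 + (-49)*x^5 + (-53)*x^6, (1)*x^2 + (8)*x^3 + (36)*x^4 + (44)*x^5 + (33)*x^6; (-20)*x^3 + (-30)*x^4 + (-49)*x^5 + (-53)*x^6, (12)*x^3 + (26)*x^4 + (56)*x^5 + (106)*x^6, (-20)*x^3 + (-30)*x^4 + (-49)*x^5 + (-53)*x^6; (1)*x^2 + (8)*x^3 + (36)*x^4 + (44)*x^5 + (33)*x^6, (-20)*x^3 + (-30)*x^4 + (-49)*x^5 + (-53)*x^6, (44)*x^3 + (20)*x^4 + (26)*x^5 + (20)*x^6] := by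
  have h : Ssum 3 3 x = Amat x * Ssum 2 3 x + Bmat x * Ssum 3 2 x :=
    Ssum_succ_succ 2 2 x
  rw [h, s_2_3, s_3_2]
  ext i j
  fin_cases i <;> fin_cases j <;>
    simp [Amat, Bmat, Matrix.mul_apply, Fin.sum_univ_three] <;> ring

set_option maxHeartbeats 1600000 in
lemma s_3_4 (x : ℝ) : Ssum 3 4 x = !![(131)*x^4 + (90)*x^5 + (105)*x^6 + (73)*x^7, (-1)*x^3 + (-73)*x^4 + (-108)*x^5 + (-163)*x^6 + (-159)*x^7, (1)*x^2 + (9)*x^3 + (45)*x^4 + (102)*x^5 + (121)*x^6 + (86)*x^7; (-1)*x^3 + (-73)*x^4 + (-108)*x^5 + (-163)*x^6 + (-159)*x^7, (7)*x^3 + (41)*x^4 + (94)*x^5 + (185)*x^6 + (289)*x^7, (-27)*x^3 + (-39)*x^4 + (-87)*x^5 + (-133)*x^6 + (-130)*x^7; (1)*x^2 + (9)*x^3 + (45)*x^4 + (102)*x^5 + (121)*x^6 + (86)*x^7, (-27)*x^3 + (-39)*x^4 + (-87)*x^5 + (-133)*x^6 + (-130)*x^7, (70)*x^3 + (31)*x^4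 + (47)*x^5 + (60)*x^6 + (44)*x^7] := by
  have h : Ssum 3 4 x = Amat x * Ssum 2 4 x + Bmat x * Ssum 3 3 x :=
    Ssum_succ_succ 2 3 x
  rw [h, s_2_4, s_3_3]
  ext i j
  fin_cases i <;> fin_cases j <;>
    simp [Amat, Bmat, Matrix.mul_apply, Fin.sum_univ_three] <;> ring

set_option maxHeartbeats 1600000 in
lemma s_3_5 (x : ℝ) : Ssum 3 5 x = !![(2)*x^4 + (376)*x^5 + (322)*x^6 + (356)*x^7 + (232)*x^8, (-1)*x^3 + (-11)*x^4 + (-226)*x^5 + (-350)*x^6 + (-500)*x^7 + (-448)*x^8, (1)*x^2 + (10)*x^3 + (55)*x^4 + (124)*x^5 + (273)*x^6 + (318)*x^7 + (216)*x^8; (-1)*x^3 + (-11)*x^4 + (-226)*x^5 + (-350)*x^6 + (-500)*x^7 + (-448)*x^8, (8)*x^3 + (18)*x^4 + (136)*x^5 + (306)*x^6 + (564)*x^7 + (760)*x^8, (-35)*x^3 + (-49)*x^4 + (-109)*x^5 + (-237)*x^6 + (-346)*x^7 + (-312)*x^8; (1)*x^2 + (10)*x^3 + (55)*x^4 + (124)*x^5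 + (273)*x^6 + (318)*x^7 + (216)*x^8, (-35)*x^3 + (-49)*x^4 + (-109)*x^5 + (-237)*x^6 + (-346)*x^7 + (-312)*x^8, (104)*x^3 + (44)*x^4 + (72)*x^5 + (108)*x^6 + (136)*x^7 + (96)*x^8] := by
  have h : Ssum 3 5 x = Amat x * Ssum 2 5 x + Bmat x * Ssum 3 4 x :=
    Ssum_succ_succ 2 4 x
  rw [h, s_2_5, s_3_4]
  ext i j
  fin_cases i <;> fin_cases j <;>
    simp [Amat, Bmat, Matrix.mul_apply, Fin.sum_univ_three] <;> ring

set_option maxHeartbeats 1600000 in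
lemma s_4_0 (x : ℝ) : Ssum 4 0 x = !![(1), 0, 0; 0, (8)*x^4, (-8)*x^4; 0, (-8)*x^4, (8)*x^4] := by
  have h : Ssum 4 0 x = Amat x * Ssum 3 0 x := by
    rw [Ssum_right_pow, Ssum_right_pow, ← pow_succ']
  rw [h, s_3_0]
  ext i j
  fin_cases i <;> fin_cases j <;>
    simp [Amat, Bmat, Matrix.mul_apply, Fin.sum_univ_three, Matrix.vecHead, Matrix.vecTail] <;> ring

set_option maxHeartbeats 1600000 in
lemma s_4_1 (x : ℝ) : Ssum 4 1 x = !![(5)*x, (-1)*x + (-1)*x^2 + (-2)*x^3 + (-4)*x^4 + (-8)*x^5, (1)*x^2 + (2)*x^3 + (4)*x^4 + (8)*x^5; (-1)*x + (-1)*x^2 + (-2)*x^3 + (-4)*x^4 + (-8)*x^5, (12)*x^4 + (28)*x^5, (-20)*x^4 + (-20)*x^5; (1)*x^2 + (2)*x^3 + (4)*x^4 + (8)*x^5, (-20)*x^4 + (-20)*x^5, (28)*x^4 + (12)*x^5] := by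
  have h : Ssum 4 1 x = Amat x * Ssum 3 1 x + Bmat x * Ssum 4 0 x :=
    Ssum_succ_succ 3 0 x
  rw [h, s_3_1, s_4_0]
  ext i j
  fin_cases i <;> fin_cases j <;>
    simp [Amat, Bmat, Matrix.mul_apply, Fin.sum_univ_three] <;> ring

set_option maxHeartbeats 1600000 in
lemma s_4_2 (x : ℝ) : Ssum 4 2 x = !![(20)*x^2 + (4)*x^3 + (6)*x^4 + (8)*x^5 + (8)*x^6, (-6)*x^2 + (-7)*x^3 + (-15)*x^4 + (-32)*x^5 + (-36)*x^6, (1)*x^2 + (8)*x^3 + (17)*x^4 + (36)*x^5 + (28)*x^6; (-6)*x^2 + (-7)*x^3 + (-15)*x^4 + (-32)*x^5 + (-36)*x^6, (1)*x^2 + (2)*x^3 + (23)*x^4 + (48)*x^5 + (94)*x^6, (-1)*x^3 + (-41)*x^4 + (-52)*x^5 + (-58)*x^6; (1)*x^2 + (8)*x^3 + (17)*x^4 + (36)*x^5 + (28)*x^6, (-1)*x^3 + (-41)*x^4 + (-52)*x^5 + (-58)*x^6, (67)*x^4 + (40)*x^5 + (30)*x^6] := by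
  have h : Ssum 4 2 x = Amat x * Ssum 3 2 x + Bmat x * Ssum 4 1 x :=
    Ssum_succ_succ 3 1 x
  rw [h, s_3_2, s_4_1]
  ext i j
  fin_cases i <;> fin_cases j <;>
    simp [Amat, Bmat, Matrix.mul_apply, Fin.sum_univ_three] <;> ring

set_option maxHeartbeats 1600000 in
lemma s_4_3 (x : ℝ) : Ssum 4 3 x = !![(70)*x^3 + (31)*x^4 + (47)*x^5 + (60)*x^6 + (44)*x^7, (-27)*x^3 + (-39)*x^4 + (-87)*x^5 + (-133)*x^6 + (-130)*x^7, (1)*x^2 + (9)*x^3 + (45)*x^4 + (102)*x^5 + (121)*x^6 + (86)*x^7; (-27)*x^3 + (-39)*x^4 + (-87)*x^5 + (-133)*x^6 + (-130)*x^7, (7)*x^3 + (41)*x^4 + (94)*x^5 + (185)*x^6 + (289)*x^7, (-1)*x^3 + (-73)*x^4 + (-108)*x^5 + (-163)*x^6 + (-159)*x^7; (1)*x^2 + (9)*x^3 + (45)*x^4 + (102)*x^5 + (121)*x^6 + (86)*x^7, (-1)*x^3 + (-73)*x^4 + (-108)*x^5 + (-163)*x^6 + (-159)*x^7, (131)*x^4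 + (90)*x^5 + (105)*x^6 + (73)*x^7] := by
  have h : Ssum 4 3 x = Amat x * Ssum 3 3 x + Bmat x * Ssum 4 2 x :=
    Ssum_succ_succ 3 2 x
  rw [h, s_3_3, s_4_2]
  ext i j
  fin_cases i <;> fin_cases j <;>
    simp [Amat, Bmat, Matrix.mul_apply, Fin.sum_univ_three] <;> ring

set_option maxHeartbeats 1600000 in
lemma s_4_4 (x : ℝ) : Ssum 4 4 x = !![(228)*x^4 + (160)*x^5 + (239)*x^6 + (266)*x^7 + (174)*x^8, (-1)*x^3 + (-107)*x^4 + (-188)*x^5 + (-344)*x^6 + (-477)*x^7 + (-419)*x^8, (1)*x^2 + (10)*x^3 + (55)*x^4 + (220)*x^5 + (331)*x^6 + (370)*x^7 + (245)*x^8; (-1)*x^3 + (-107)*x^4 + (-188)*x^5 + (-344)*x^6 + (-477)*x^7 + (-419)*x^8, (68)*x^4 + (160)*x^5 + (362)*x^6 + (636)*x^7 + (838)*x^8, (-1)*x^3 + (-107)*x^4 + (-188)*x^5 + (-344)*x^6 + (-477)*x^7 + (-419)*x^8; (1)*x^2 + (10)*x^3 + (55)*x^4 + (220)*x^5 + (331)*x^6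 + (370)*x^7 + (245)*x^8, (-1)*x^3 + (-107)*x^4 + (-188)*x^5 + (-344)*x^6 + (-477)*x^7 + (-419)*x^8, (228)*x^4 + (160)*x^5 + (239)*x^6 + (266)*x^7 + (174)*x^8] := by
  have h : Ssum 4 4 x = Amat x * Ssum 3 4 x + Bmat x * Ssum 4 3 x :=
    Ssum_succ_succ 3 3 x
  rw [h, s_3_4, s_4_3]
  ext i j
  fin_cases i <;> fin_cases j <;>
    simp [Amat, Bmat, Matrix.mul_apply, Fin.sum_univ_three] <;> ring

set_option maxHeartbeats 1600000 in
lemma s_4_5 (x : ℝ) : Ssum 4 5 x = !![(3)*x^4 + (711)*x^5 + (670)*x^6 + (939)*x^7 + (975)*x^8 + (593)*x^9, (-1)*x^3 + (-12)*x^4 + (-401)*x^5 + (-698)*x^6 + (-1206)*x^7 + (-1561)*x^8 + (-1257)*x^9, (1)*x^2 + (11)*x^3 + (66)*x^4 + (286)*x^5 + (681)*x^6 + (993)*x^7 + (1063)*x^8 + (664)*x^9; (-1)*x^3 + (-12)*x^4 + (-401)*x^5 + (-698)*x^6 + (-1206)*x^7 + (-1561)*x^8 + (-1257)*x^9, (44)*x^4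 + (242)*x^5 + (593)*x^6 + (1249)*x^7 + (2023)*x^8 + (2329)*x^9, (-1)*x^3 + (-150)*x^4 + (-255)*x^5 + (-589)*x^6 + (-1020)*x^7 + (-1329)*x^8 + (-1072)*x^9; (1)*x^2 + (11)*x^3 + (66)*x^4 + (286)*x^5 + (681)*x^6 + (993)*x^7 + (1063)*x^8 + (664)*x^9, (-1)*x^3 + (-150)*x^4 + (-255)*x^5 + (-589)*x^6 + (-1020)*x^7 + (-1329)*x^8 + (-1072)*x^9, (367)*x^4 + (253)*x^5 + (420)*x^6 + (611)*x^7 + (656)*x^8 + (408)*x^9] := by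
  have h : Ssum 4 5 x = Amat x * Ssum 3 5 x + Bmat x * Ssum 4 4 x :=
    Ssum_succ_succ 3 4 x
  rw [h, s_3_5, s_4_4]
  ext i j
  fin_cases i <;> fin_cases j <;>
    simp [Amat, Bmat, Matrix.mul_apply, Fin.sum_univ_three] <;> ring

set_option maxHeartbeats 1600000 in
lemma s_5_0 (x : ℝ) : Ssum 5 0 x = !![(1), 0, 0; 0, (16)*x^5, (-16)*x^5; 0, (-16)*x^5, (16)*x^5] := by
  have h : Ssum 5 0 x = Amat x * Ssum 4 0 x := by
    rw [Ssum_right_pow, Ssum_right_pow, ← pow_succ']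
  rw [h, s_4_0]
  ext i j
  fin_cases i <;> fin_cases j <;>
    simp [Amat, Bmat, Matrix.mul_apply, Fin.sum_univ_three, Matrix.vecHead, Matrix.vecTail] <;> ring

set_option maxHeartbeats 1600000 in
lemma s_5_1 (x : ℝ) : Ssum 5 1 x = !![(6)*x, (-1)*x + (-1)*x^2 + (-2)*x^3 + (-4)*x^4 + (-8)*x^5 + (-16)*x^6, (1)*x^2 + (2)*x^3 + (4)*x^4 + (8)*x^5 + (16)*x^6; (-1)*x + (-1)*x^2 + (-2)*x^3 + (-4)*x^4 + (-8)*x^5 + (-16)*x^6, (32)*x^5 + (64)*x^6, (-48)*x^5 + (-48)*x^6; (1)*x^2 + (2)*x^3 + (4)*x^4 + (8)*x^5 + (16)*x^6, (-48)*x^5 + (-48)*x^6, (64)*x^5 + (32)*x^6] := by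
  have h : Ssum 5 1 x = Amat x * Ssum 4 1 x + Bmat x * Ssum 5 0 x :=
    Ssum_succ_succ 4 0 x
  rw [h, s_4_1, s_5_0]
  ext i j
  fin_cases i <;> fin_cases j <;>
    simp [Amat, Bmat, Matrix.mul_apply, Fin.sum_univ_three] <;> ring

set_option maxHeartbeats 1600000 in
lemma s_5_2 (x : ℝ) : Ssum 5 2 x = !![(27)*x^2 + (5)*x^3 + (8)*x^4 + (12)*x^5 + (16)*x^6 + (16)*x^7, (-7)*x^2 + (-8)*x^3 + (-17)*x^4 + (-36)*x^5 + (-76)*x^6 + (-80)*x^7, (1)*x^2 + (9)*x^3 + (19)*x^4 + (40)*x^5 + (84)*x^6 + (64)*x^7; (-7)*x^2 + (-8)*x^3 + (-17)*x^4 + (-36)*x^5 + (-76)*x^6 + (-80)*x^7, (1)*x^2 + (2)*x^3 + (5)*x^4 + (68)*x^5 + (140)*x^6 + (232)*x^7, (-1)*x^3 + (-3)*x^4 + (-112)*x^5 + (-148)*x^6 + (-152)*x^7; (1)*x^2 + (9)*x^3 + (19)*x^4 + (40)*x^5 + (84)*x^6 + (64)*x^7, (-1)*x^3 + (-3)*x^4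 + (-112)*x^5 + (-148)*x^6 + (-152)*x^7, (1)*x^4 + (172)*x^5 + (124)*x^6 + (88)*x^7] := by
  have h : Ssum 5 2 x = Amat x * Ssum 4 2 x + Bmat x * Ssum 5 1 x :=
    Ssum_succ_succ 4 1 x
  rw [h, s_4_2, s_5_1]
  ext i j
  fin_cases i <;> fin_cases j <;>
    simp [Amat, Bmat, Matrix.mul_apply, Fin.sum_univ_three] <;> ring

set_option maxHeartbeats 1600000 in
lemma s_5_3 (x : ℝ) : Ssum 5 3 x = !![(104)*x^3 + (44)*x^4 + (72)*x^5 + (108)*x^6 + (136)*x^7 + (96)*x^8, (-35)*x^3 + (-49)*x^4 + (-109)*x^5 + (-237)*x^6 + (-346)*x^7 + (-312)*x^8, (1)*x^2 + (10)*x^3 + (55)*x^4 + (124)*x^5 + (273)*x^6 + (318)*x^7 + (216)*x^8; (-35)*x^3 + (-49)*x^4 + (-109)*x^5 + (-237)*x^6 + (-346)*x^7 + (-312)*x^8, (8)*x^3 + (18)*x^4 + (136)*x^5 + (306)*x^6 + (564)*x^7 + (760)*x^8, (-1)*x^3 + (-11)*x^4 + (-226)*x^5 + (-350)*x^6 + (-500)*x^7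 + (-448)*x^8; (1)*x^2 + (10)*x^3 + (55)*x^4 + (124)*x^5 + (273)*x^6 + (318)*x^7 + (216)*x^8, (-1)*x^3 + (-11)*x^4 + (-226)*x^5 + (-350)*x^6 + (-500)*x^7 + (-448)*x^8, (2)*x^4 + (376)*x^5 + (322)*x^6 + (356)*x^7 + (232)*x^8] := by
  have h : Ssum 5 3 x = Amat x * Ssum 4 3 x + Bmat x * Ssum 5 2 x :=
    Ssum_succ_succ 4 2 x
  rw [h, s_4_3, s_5_2]
  ext i j
  fin_cases i <;> fin_cases j <;>
    simp [Amat, Bmat, Matrix.mul_apply, Fin.sum_univ_three] <;> ring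

set_option maxHeartbeats 1600000 in
lemma s_5_4 (x : ℝ) : Ssum 5 4 x = !![(367)*x^4 + (253)*x^5 + (420)*x^6 + (611)*x^7 + (656)*x^8 + (408)*x^9, (-1)*x^3 + (-150)*x^4 + (-255)*x^5 + (-589)*x^6 + (-1020)*x^7 + (-1329)*x^8 + (-1072)*x^9, (1)*x^2 + (11)*x^3 + (66)*x^4 + (286)*x^5 + (681)*x^6 + (993)*x^7 + (1063)*x^8 + (664)*x^9; (-1)*x^3 + (-150)*x^4 + (-255)*x^5 + (-589)*x^6 + (-1020)*x^7 + (-1329)*x^8 + (-1072)*x^9, (44)*x^4 + (242)*x^5 + (593)*x^6 + (1249)*x^7 + (2023)*x^8 + (2329)*x^9, (-1)*x^3 + (-12)*x^4 + (-401)*x^5 + (-698)*x^6 + (-1206)*x^7 + (-1561)*x^8 + (-1257)*x^9; (1)*x^2 + (11)*x^3 + (66)*x^4 + (286)*x^5 + (681)*x^6 + (993)*x^7 + (1063)*x^8 + (664)*x^9, (-1)*x^3 + (-12)*x^4 + (-401)*x^5 + (-698)*x^6 + (-1206)*x^7 + (-1561)*x^8 + (-1257)*x^9, (3)*x^4 +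 (711)*x^5 + (670)*x^6 + (939)*x^7 + (975)*x^8 + (593)*x^9] := by
  have h : Ssum 5 4 x = Amat x * Ssum 4 4 x + Bmat x * Ssum 5 3 x :=
    Ssum_succ_succ 4 3 x
  rw [h, s_4_4, s_5_3]
  ext i j
  fin_cases i <;> fin_cases j <;>
    simp [Amat, Bmat, Matrix.mul_apply, Fin.sum_univ_three] <;> ring

set_option maxHeartbeats 1600000 in
lemma s_5_5 (x : ℝ) : Ssum 5 5 x = !![(4)*x^4 + (1228)*x^5 + (1178)*x^6 + (1948)*x^7 + (2606)*x^8 + (2578)*x^9 + (1480)*x^10, (-1)*x^3 + (-13)*x^4 + (-595)*x^5 + (-1195)*x^6 + (-2388)*x^7 + (-3830)*x^8 + (-4609)*x^9 + (-3401)*x^10, (1)*x^2 + (12)*x^3 + (78)*x^4 + (364)*x^5 + (1368)*x^6 + (2372)*x^7 + (3262)*x^8 + (3288)*x^9 + (1921)*x^10; (-1)*x^3 + (-13)*x^4 + (-595)*x^5 + (-1195)*x^6 + (-2388)*x^7 + (-3830)*x^8 + (-4609)*x^9 + (-3401)*x^10, (2)*x^4 + (388)*x^5 + (994)*x^6 +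 (2364)*x^7 + (4538)*x^8 + (6704)*x^9 + (6802)*x^10, (-1)*x^3 + (-13)*x^4 + (-595)*x^5 + (-1195)*x^6 + (-2388)*x^7 + (-3830)*x^8 + (-4609)*x^9 + (-3401)*x^10; (1)*x^2 + (12)*x^3 + (78)*x^4 + (364)*x^5 + (1368)*x^6 + (2372)*x^7 + (3262)*x^8 + (3288)*x^9 + (1921)*x^10, (-1)*x^3 + (-13)*x^4 + (-595)*x^5 + (-1195)*x^6 + (-2388)*x^7 + (-3830)*x^8 + (-4609)*x^9 + (-3401)*x^10, (4)*x^4 + (1228)*x^5 + (1178)*x^6 + (1948)*x^7 + (2606)*x^8 + (2578)*x^9 + (1480)*x^10] := by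
  have h : Ssum 5 5 x = Amat x * Ssum 4 5 x + Bmat x * Ssum 5 4 x :=
    Ssum_succ_succ 4 4 x
  rw [h, s_4_5, s_5_4]
  ext i j
  fin_cases i <;> fin_cases j <;>
    simp [Amat, Bmat, Matrix.mul_apply, Fin.sum_univ_three] <;> ring


/-- `tr w(A_x, B_x)`: the trace of the word `w` evaluated at `(A_x, B_x)`. -/
noncomputable def wtr (x : ℝ) (w : List Bool) : ℝ :=
  ((w.map fun b => if b = true then Amat x else Bmat x).prod).trace

/-- The averaged word trace `p_{n,m}(A_x, B_x)`. -/
noncomputable def pnm (n m : ℕ) (x : ℝ) : ℝ :=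
  (1 / ((n + m).choose n)) * ∑ w ∈ words n m, wtr x w

theorem stmt_14 : ∀ x : ℝ,
    (Amat x ^ 5 * Bmat x ^ 5).trace - pnm 5 5 x =
      (5 * x ^ 4 / 126) *
        (5475 * x ^ 6 - 1186 * x ^ 5 - 975 * x ^ 4 - 626 * x ^ 3 - 335 * x ^ 2 +
          522 * x - 1) := by
  intro x
  have hA : Amat x ^ 5 = Ssum 5 0 x := (Ssum_right_pow 5 x).symm
  have hB : Bmat x ^ 5 = Ssum 0 5 x := (Ssum_left_pow 5 x).symm
  have hsum : ∑ w ∈ words 5 5, wtr x w = (Ssum 5 5 x).trace := by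
    rw [Ssum, Matrix.trace_sum]
    rfl
  have hp : pnm 5 5 x = (1 / 252 : ℝ) * (Ssum 5 5 x).trace := by
    have h252 : Nat.choose (5+5) 5 = 252 := rfl
    rw [pnm, hsum, h252]
    norm_num
  rw [hA, hB, hp, s_5_0, s_0_5, s_5_5]
  simp [Matrix.trace_fin_three, Matrix.mul_apply, Fin.sum_univ_three]
  ring
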